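/- For every ideal I (in our sense) on a countably infinite set X there exists an ideal J (in our sense) such that C_J is a maximal proper subclone of C_I: C_J ⊊ C_I and there is no clone D with C_J ⊊ D ⊊ C_I. -/

import Mathlib

/-- The set of all finitary operations on `X`: an element of arity index `n`
is an `(n+1)`-ary operation, so that all arities are `≥ 1`. -/
abbrev Ops (X : Type) : Type := Σ n : ℕ, (Fin (n + 1) → X) → X

/-- `opImage f A` is the image `f[A^n]` of the `n`-th power of `A` under the
`n`-ary operation `f`. -/
def opImage {X : Type} (f : Ops X) (A : Set X) : Set X :=
  f.2 '' {x | ∀ i, x i ∈ A}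

/-- An ideal "in our sense": closed under subsets and finite unions, contains all
finite sets, contains at least one infinite set, and does not contain `X`. -/
def IsIdealInOurSense {X : Type} (I : Set (Set X)) : Prop :=
  (∀ A ∈ I, ∀ B ⊆ A, B ∈ I) ∧
  (∀ A ∈ I, ∀ B ∈ I, A ∪ B ∈ I) ∧
  (∀ A : Set X, A.Finite → A ∈ I) ∧
  (∃ A ∈ I, A.Infinite) ∧
  (Set.univ : Set X) ∉ I

/-- The clone `C_I` induced by a collection of sets `I`: all operations mapping
powers of `I`-sets into `I`. -/
def idealClone {X : Type} (I : Set (Set X)) : Set (Ops X) :=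
  {f | ∀ A ∈ I, opImage f A ∈ I}

/-- The unary part `C_I^{(1)}` of the clone induced by `I`. -/
def unaryPart {X : Type} (I : Set (Set X)) : Set (X → X) :=
  {f | ∀ A ∈ I, f '' A ∈ I}

/-- A clone: a set of finitary operations containing all projections and closed
under composition. -/
def IsClone {X : Type} (C : Set (Ops X)) : Prop :=
  (∀ (n : ℕ) (i : Fin (n + 1)), (⟨n, fun x => x i⟩ : Ops X) ∈ C) ∧
  ∀ (n m : ℕ) (f : (Fin (n + 1) → X) → X) (g : Fin (n + 1) → (Fin (m + 1) → X) → X),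
    (⟨n, f⟩ : Ops X) ∈ C → (∀ i, (⟨m, g i⟩ : Ops X) ∈ C) →
    (⟨m, fun x => f fun i => g i x⟩ : Ops X) ∈ C

/-- The clone generated by a set of operations. -/
def cloneGen {X : Type} (F : Set (Ops X)) : Set (Ops X) :=
  ⋂₀ {C : Set (Ops X) | IsClone C ∧ F ⊆ C}

/-- A precomplete clone: a proper clone whose only proper cover is the full clone `O`. -/
def IsPrecompleteClone {X : Type} (C : Set (Ops X)) : Prop :=
  IsClone C ∧ C ≠ Set.univ ∧
  ∀ D : Set (Ops X), IsClone D → C ⊂ D → D = Set.univ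

/-- The regularization `Î` of `I`: all sets `A` such that every infinite subset
of `A` contains an infinite member of `I`. -/
def regularization {X : Type} (I : Set (Set X)) : Set (Set X) :=
  {A | ∀ B ⊆ A, B.Infinite → ∃ C ⊆ B, C.Infinite ∧ C ∈ I}

open Classical Set
set_option linter.unusedSectionVars false

lemma ideal_downward {X : Type} {I : Set (Set X)} (hI : IsIdealInOurSense I) {A B : Set X}
    (hA : A ∈ I) (h : B ⊆ A) : B ∈ I := hI.1 A hA B h

lemma ideal_union {X : Type} {I : Set (Set X)} (hI : IsIdealInOurSense I) {A B : Set X}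
    (hA : A ∈ I) (hB : B ∈ I) : A ∪ B ∈ I := hI.2.1 A hA B hB

lemma ideal_finite {X : Type} {I : Set (Set X)} (hI : IsIdealInOurSense I) {A : Set X}
    (h : A.Finite) : A ∈ I := hI.2.2.1 A h

lemma ideal_finite_iUnion {X : Type} {I : Set (Set X)} (hI : IsIdealInOurSense I) {ι : Type*}
    [Fintype ι] (f : ι → Set X) (h : ∀ i, f i ∈ I) : (⋃ i, f i) ∈ I := by
  classical
  have key : ∀ (s : Finset ι), (⋃ i ∈ s, f i) ∈ I := by
    intro s
    induction s using Finset.induction_on with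
    | empty => simpa using ideal_finite hI Set.finite_empty
    | @insert a s ha ih =>
      have heq : (⋃ i ∈ insert a s, f i) = f a ∪ ⋃ i ∈ s, f i := by
        simp [Set.biUnion_insert]
      rw [heq]
      exact ideal_union hI (h a) ih
  have := key Finset.univ
  simpa using this

noncomputable section FK

def FKset (A : Set ℕ) : Set (Finset ℕ × Finset (Finset ℕ)) :=
  {p | p.1.filter (· ∈ A) ∈ p.2}

lemma FK_ground_infinite {ι : Type*} (emb : ι → Set ℕ) (hemb : Function.Injective emb)
    (t : Finset ι) (σ : ι → Bool) :
    {p : Finset ℕ × Finset (Finset ℕ) | ∀ i ∈ t, (p ∈ FKset (emb i) ↔ σ i = true)}.Infinite := by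
  classical
  set pos := t.filter (fun i => σ i = true) with hpos
  set neg := t.filter (fun i => σ i = false) with hneg
  have hsep' : ∀ i j, ∃ x, (i ∈ pos → j ∈ neg → ¬ (x ∈ emb i ↔ x ∈ emb j)) := by
    intro i j
    by_cases hi : i ∈ pos
    · by_cases hj : j ∈ neg
      · have hij : emb i ≠ emb j := by
          intro h
          have hij' := hemb h
          subst hij'
          simp only [hpos, Finset.mem_filter] at hi
          simp only [hneg, Finset.mem_filter] at hj
          rw [hi.2] at hj
          exact absurd hj.2 (by simp)
        by_contra hcon
        push_neg at hcon
        exact hij (Set.ext fun x => (hcon x).2.2)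
      · exact ⟨0, fun _ h => absurd h hj⟩
    · exact ⟨0, fun h _ => absurd h hi⟩
  choose d hd using hsep'
  set u₀ : Finset ℕ := (pos ×ˢ neg).image (fun q => d q.1 q.2) with hu₀
  set base := (u₀.sup id) + 1 with hbase
  have hnotmem : ∀ n : ℕ, base + n ∉ u₀ := by
    intro n hn
    have := Finset.le_sup (f := id) hn
    simp only [id_eq] at this
    omega
  set F : ℕ → Finset ℕ × Finset (Finset ℕ) :=
    fun n => (u₀ ∪ {base + n}, pos.image (fun i => (u₀ ∪ {base + n}).filter (· ∈ emb i))) with hF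
  apply Set.infinite_of_injective_forall_mem (f := F)
  · intro n n' h
    have h1 : u₀ ∪ {base + n} = u₀ ∪ {base + n'} := congrArg Prod.fst h
    have : base + n ∈ u₀ ∪ {base + n'} := by
      rw [← h1]; simp
    rcases Finset.mem_union.mp this with h2 | h2
    · exact absurd h2 (hnotmem n)
    · have := Finset.mem_singleton.mp h2; omega
  · intro n
    simp only [Set.mem_setOf_eq]
    intro i hi
    by_cases hσ : σ i = true
    · simp only [hσ, iff_true]
      have hipos : i ∈ pos := Finset.mem_filter.mpr ⟨hi, hσ⟩
      simp only [FKset, hF, Set.mem_setOf_eq]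
      exact Finset.mem_image_of_mem _ hipos
    · have hineg : i ∈ neg := Finset.mem_filter.mpr ⟨hi, by simpa using hσ⟩
      have hσ' : σ i = false := by simpa using hσ
      rw [hσ']
      simp only [show ((false : Bool) = true) = False from by simp, iff_false]
      intro hmem
      simp only [FKset, hF, Set.mem_setOf_eq] at hmem
      obtain ⟨i', hi'pos, heq⟩ := Finset.mem_image.mp hmem
      have hx : d i' i ∈ u₀ := by
        rw [hu₀]
        exact Finset.mem_image.mpr ⟨(i', i), Finset.mem_product.mpr ⟨hi'pos, hineg⟩, rfl⟩
      have hxu : d i' i ∈ u₀ ∪ {base + n} := Finset.mem_union_left _ hx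
      have hiff : d i' i ∈ emb i ↔ d i' i ∈ emb i' := by
        constructor
        · intro hm
          have : d i' i ∈ (u₀ ∪ {base + n}).filter (· ∈ emb i) := Finset.mem_filter.mpr ⟨hxu, hm⟩
          rw [← heq] at this
          exact (Finset.mem_filter.mp this).2
        · intro hm
          have : d i' i ∈ (u₀ ∪ {base + n}).filter (· ∈ emb i') := Finset.mem_filter.mpr ⟨hxu, hm⟩
          rw [heq] at this
          exact (Finset.mem_filter.mp this).2
      exact hd i' i hi'pos hineg (Iff.symm hiff)

lemma FK_independent {X : Type} {A₀ : Set X} (eqv : (Finset ℕ × Finset (Finset ℕ)) ≃ ↥A₀)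
    {ι : Type*} (emb : ι ↪ Set ℕ) (E : ι → Set X)
    (hE : ∀ i, E i = Subtype.val '' (eqv '' FKset (emb i)))
    (t : Finset ι) (σ : ι → Bool) (K : Set X) (hK : K.Finite) :
    ((A₀ ∩ ⋂ i ∈ t, (if σ i = true then E i else (E i)ᶜ)) \ K).Infinite := by
  have hground := FK_ground_infinite emb emb.injective t σ
  set φ : (Finset ℕ × Finset (Finset ℕ)) → X := fun p => ((eqv p : ↥A₀) : X) with hφ
  have hφinj : Function.Injective φ := by
    intro p q h
    exact eqv.injective (Subtype.val_injective h)
  have himg : φ '' {p | ∀ i ∈ t, (p ∈ FKset (emb i) ↔ σ i = true)} ⊆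
      A₀ ∩ ⋂ i ∈ t, (if σ i = true then E i else (E i)ᶜ) := by
    rintro x ⟨p, hp, rfl⟩
    refine ⟨(eqv p).2, ?_⟩
    simp only [Set.mem_iInter]
    intro i hi
    by_cases hσ : σ i = true
    · rw [if_pos hσ, hE i]
      exact ⟨eqv p, ⟨p, (hp i hi).mpr hσ, rfl⟩, rfl⟩
    · rw [if_neg hσ]
      intro hxE
      rw [hE i] at hxE
      obtain ⟨y, ⟨q, hq, rfl⟩, hyx⟩ := hxE
      have hqp : q = p := eqv.injective (Subtype.val_injective hyx)
      subst hqp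
      exact hσ ((hp i hi).mp hq)
  have himginf : (φ '' {p | ∀ i ∈ t, (p ∈ FKset (emb i) ↔ σ i = true)}).Infinite :=
    hground.image hφinj.injOn
  exact Set.Infinite.mono (Set.diff_subset_diff_left himg) (himginf.diff hK)

end FK

def box {X : Type} (m : ℕ) (Y : Finset X → Set X) (r : Set X) : Set X :=
  ⋃ s ∈ {s : Finset X | ↑s ⊆ r ∧ s.card ≤ m}, Y s

lemma box_mono {X : Type} {m : ℕ} {Y : Finset X → Set X} {r r' : Set X} (h : r ⊆ r') :
    box m Y r ⊆ box m Y r' := by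
  apply Set.biUnion_subset_biUnion_left
  intro s hs
  exact ⟨hs.1.trans h, hs.2⟩

lemma mem_box {X : Type} {m : ℕ} {Y : Finset X → Set X} {r : Set X} {x : X} :
    x ∈ box m Y r ↔ ∃ s : Finset X, ↑s ⊆ r ∧ s.card ≤ m ∧ x ∈ Y s := by
  simp only [box, Set.mem_iUnion, Set.mem_setOf_eq, exists_prop]
  constructor
  · rintro ⟨s, ⟨h1, h2⟩, h3⟩; exact ⟨s, h1, h2, h3⟩
  · rintro ⟨s, h1, h2, h3⟩; exact ⟨s, ⟨h1, h2⟩, h3⟩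

noncomputable section Killing

variable {X : Type} (I : Set (Set X)) (A₀ : Set X)
variable (eqv : (Finset ℕ × Finset (Finset ℕ)) ≃ ↥A₀)
variable (emb : ((Set X × ℕ × (Finset X → Set X)) × ℕ) ↪ Set ℕ)

def kE (i : (Set X × ℕ × (Finset X → Set X)) × ℕ) : Set X :=
  Subtype.val '' (eqv '' FKset (emb i))

def kAtom (a : Set X × ℕ × (Finset X → Set X)) (σ : Fin a.2.1 → Bool) : Set X :=
  {x | ∀ j : Fin a.2.1, x ∈ kE A₀ eqv emb (a, (j : ℕ)) ↔ σ j = true}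

def kCells (a : Set X × ℕ × (Finset X → Set X)) (T : Finset (Fin a.2.1 → Bool)) : Set X :=
  (⋃ σ ∈ T, kAtom A₀ eqv emb a σ) ∩ a.1

def kActive (a : Set X × ℕ × (Finset X → Set X)) : Prop :=
  ∃ T : Finset (Fin a.2.1 → Bool), T.card ≤ a.2.1 ∧ box a.2.1 a.2.2 (kCells A₀ eqv emb a T) ∉ I

def kR0 (a : Set X × ℕ × (Finset X → Set X)) : Set X :=
  if h : kActive I A₀ eqv emb a then kCells A₀ eqv emb a h.choose else ∅

lemma kR0_spec {a : Set X × ℕ × (Finset X → Set X)} (h : kActive I A₀ eqv emb a) :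
    ∃ T : Finset (Fin a.2.1 → Bool), T.card ≤ a.2.1 ∧ kR0 I A₀ eqv emb a = kCells A₀ eqv emb a T ∧
      box a.2.1 a.2.2 (kR0 I A₀ eqv emb a) ∉ I := by
  refine ⟨h.choose, h.choose_spec.1, ?_, ?_⟩
  · simp [kR0, h]
  · simp only [kR0, h, dif_pos]
    exact h.choose_spec.2

lemma kR0_subset (a : Set X × ℕ × (Finset X → Set X)) : kR0 I A₀ eqv emb a ⊆ a.1 := by
  unfold kR0
  split
  · exact Set.inter_subset_right
  · exact Set.empty_subset _

end Killing

noncomputable section KillingCont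

variable {X : Type} (I : Set (Set X)) (A₀ : Set X)
variable (eqv : (Finset ℕ × Finset (Finset ℕ)) ≃ ↥A₀)
variable (emb : ((Set X × ℕ × (Finset X → Set X)) × ℕ) ↪ Set ℕ)

lemma kPHI (l : Finset (Set X × ℕ × (Finset X → Set X))) :
    (∀ a ∈ l, kActive I A₀ eqv emb a) →
    ∀ (t : Finset ((Set X × ℕ × (Finset X → Set X)) × ℕ))
      (σ : ((Set X × ℕ × (Finset X → Set X)) × ℕ) → Bool),
      (∀ i ∈ t, i.1 ∉ l) → ∀ (K : Set X), K.Finite →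
      (((A₀ ∩ ⋂ i ∈ t, (if σ i = true then kE A₀ eqv emb i else (kE A₀ eqv emb i)ᶜ)) ∩
        ⋂ a ∈ l, (kR0 I A₀ eqv emb a)ᶜ) \ K).Infinite := by
  classical
  induction l using Finset.induction_on with
  | empty =>
    intro _ t σ hts K hK
    have h := FK_independent eqv emb (kE A₀ eqv emb) (fun i => rfl) t σ K hK
    apply Set.Infinite.mono ?_ h
    intro x hx
    exact ⟨⟨hx.1, by simp⟩, hx.2⟩
  | @insert a l' ha ih =>
    intro hact t σ hts K hK
    have hacta : kActive I A₀ eqv emb a := hact a (Finset.mem_insert_self a l')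
    obtain ⟨T, hTcard, hTeq, _⟩ := kR0_spec I A₀ eqv emb hacta
    -- pick σ* ∉ T
    have hcardlt : T.card < Fintype.card (Fin a.2.1 → Bool) := by
      have : Fintype.card (Fin a.2.1 → Bool) = 2 ^ a.2.1 := by
        simp [Fintype.card_fun]
      rw [this]
      exact lt_of_le_of_lt hTcard Nat.lt_two_pow_self
    have hTne : T ≠ Finset.univ := by
      intro h
      rw [h, Finset.card_univ] at hcardlt
      exact lt_irrefl _ hcardlt
    have hcompl : (Tᶜ : Finset _).Nonempty := by
      rw [← Finset.card_pos, Finset.card_compl]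
      omega
    obtain ⟨σstar, hσstar⟩ := hcompl
    have hσstarT : σstar ∉ T := Finset.mem_compl.mp hσstar
    set blk : Finset ((Set X × ℕ × (Finset X → Set X)) × ℕ) :=
      (Finset.range a.2.1).image (fun j => (a, j)) with hblk
    set σ' : ((Set X × ℕ × (Finset X → Set X)) × ℕ) → Bool :=
      fun i => if h : i.1 = a ∧ i.2 < a.2.1 then σstar (⟨i.2, h.2⟩ : Fin a.2.1) else σ i with hσ'
    have hts' : ∀ i ∈ t ∪ blk, i.1 ∉ l' := by
      intro i hi
      rcases Finset.mem_union.mp hi with h | h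
      · exact fun hmem => hts i h (Finset.mem_insert_of_mem hmem)
      · simp only [hblk, Finset.mem_image, Finset.mem_range] at h
        obtain ⟨j, hj, rfl⟩ := h
        exact fun hmem => ha hmem
    have key := ih (fun b hb => hact b (Finset.mem_insert_of_mem hb)) (t ∪ blk) σ' hts' K hK
    apply Set.Infinite.mono ?_ key
    rintro x ⟨⟨⟨hxA₀, hxsides⟩, hxl'⟩, hxK⟩
    simp only [Set.mem_iInter] at hxsides hxl'
    refine ⟨⟨⟨hxA₀, ?_⟩, ?_⟩, hxK⟩
    · simp only [Set.mem_iInter]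
      intro i hi
      have hia : i.1 ≠ a := by
        intro h
        exact hts i hi (h ▸ Finset.mem_insert_self a l')
      have hσeq : σ' i = σ i := by
        simp only [hσ']
        rw [dif_neg]
        rintro ⟨h1, _⟩
        exact hia h1
      have hh := hxsides i (Finset.mem_union_left _ hi)
      rwa [hσeq] at hh
    · simp only [Set.mem_iInter]
      intro b hb
      rcases Finset.mem_insert.mp hb with rfl | hb'
      · -- x ∉ kR0 b (= a)
        have hxatom : x ∈ kAtom A₀ eqv emb b σstar := by
          intro j
          have hj : ((b, (j : ℕ))) ∈ t ∪ blk := by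
            apply Finset.mem_union_right
            simp only [hblk, Finset.mem_image, Finset.mem_range]
            exact ⟨j, j.2, rfl⟩
          have hside := hxsides _ hj
          have hσ'eq : σ' (b, (j : ℕ)) = σstar j := dif_pos ⟨rfl, j.2⟩
          rw [hσ'eq] at hside
          by_cases hbool : σstar j = true
          · rw [if_pos hbool] at hside
            simp [hbool, hside]
          · rw [if_neg hbool] at hside
            simp only [Bool.not_eq_true] at hbool
            simp [hbool]
            exact hside
        intro hxr0
        rw [hTeq] at hxr0
        obtain ⟨hxcells, _⟩ := hxr0
        simp only [Set.mem_iUnion] at hxcells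
        obtain ⟨τ, hτT, hxτ⟩ := hxcells
        have hτσ : τ = σstar := by
          funext j
          have h1 := hxτ j
          have h2 := hxatom j
          rw [Bool.eq_iff_iff]
          rw [← h1, ← h2]
        rw [hτσ] at hτT
        exact hσstarT hτT
      · exact hxl' b hb'

lemma exists_killing {X : Type} [Countable X] [Infinite X] {I : Set (Set X)}
    (hI : IsIdealInOurSense I) {A₀ : Set X} (hA₀I : A₀ ∈ I) (hA₀ : A₀.Infinite) :
    ∃ U : Ultrafilter X, A₀ ∈ U ∧ (∀ K : Set X, K.Finite → K ∉ U) ∧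
      ∀ (R : Set X) (m : ℕ) (Y : Finset X → Set X),
        (∀ r, r ⊆ R → r ∉ U → box m Y r ∈ I) → box m Y R ∈ I := by
  classical
  -- the equivalence with the FK ground type
  have : Infinite ↥A₀ := hA₀.to_subtype
  obtain ⟨d1⟩ := nonempty_denumerable (Finset ℕ × Finset (Finset ℕ))
  obtain ⟨d2⟩ := nonempty_denumerable ↥A₀
  let eqv : (Finset ℕ × Finset (Finset ℕ)) ≃ ↥A₀ :=
    (Denumerable.eqv _).trans (Denumerable.eqv _).symm
  -- the embedding of attacks into Set ℕ
  have hembne : Nonempty (((Set X × ℕ × (Finset X → Set X)) × ℕ) ↪ Set ℕ) := by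
    rw [← Cardinal.le_def]
    have hX : Cardinal.mk X = Cardinal.aleph0 := Cardinal.mk_eq_aleph0 X
    have hFin : Cardinal.mk (Finset X) = Cardinal.aleph0 := Cardinal.mk_eq_aleph0 _
    have hsX : Cardinal.mk (Set X) = 2 ^ Cardinal.aleph0 := by
      rw [Cardinal.mk_set, hX]
    have harrow : Cardinal.mk (Finset X → Set X) = 2 ^ Cardinal.aleph0 := by
      rw [← Cardinal.power_def, hsX, hFin, ← Cardinal.power_mul, Cardinal.aleph0_mul_aleph0]
    have htarget : Cardinal.mk (Set ℕ) = 2 ^ Cardinal.aleph0 := by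
      rw [Cardinal.mk_set, Cardinal.mk_nat]
    have haleq : (Cardinal.aleph0 : Cardinal) ≤ 2 ^ Cardinal.aleph0 :=
      le_of_lt (Cardinal.cantor _)
    have hmk : Cardinal.mk (((Set X × ℕ × (Finset X → Set X)) × ℕ)) =
        ((Cardinal.mk (Set X) * (Cardinal.mk ℕ * Cardinal.mk (Finset X → Set X))) *
          Cardinal.mk ℕ) := by
      simp [Cardinal.mk_prod, Cardinal.lift_id]
    rw [hmk, htarget, hsX, harrow, Cardinal.mk_nat]
    have h1 : (Cardinal.aleph0 : Cardinal) * (2 ^ Cardinal.aleph0) = 2 ^ Cardinal.aleph0 := by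
      rw [Cardinal.mul_eq_max le_rfl haleq, max_eq_right haleq]
    have h2 : (2 ^ Cardinal.aleph0 : Cardinal) * (2 ^ Cardinal.aleph0) = 2 ^ Cardinal.aleph0 := by
      rw [Cardinal.mul_eq_max haleq haleq, max_self]
    rw [h1, h2]
    rw [Cardinal.mul_eq_max haleq le_rfl, max_eq_left haleq]
  obtain ⟨emb⟩ := hembne
  -- the generating family
  set Gen : Set (Set X) :=
    {A₀} ∪ {s | ∃ K : Set X, K.Finite ∧ s = Kᶜ} ∪
      {s | ∃ a, kActive I A₀ eqv emb a ∧ s = (kR0 I A₀ eqv emb a)ᶜ} with hGen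
  -- finite intersections of members of Gen are nonempty
  have hFIP : ∀ t : Set (Set X), t ⊆ Gen → t.Finite → (⋂₀ t).Nonempty := by
    have key : ∀ t : Set (Set X), t.Finite → t ⊆ Gen →
        ∃ (l : Finset (Set X × ℕ × (Finset X → Set X))) (K : Set X),
        (∀ a ∈ l, kActive I A₀ eqv emb a) ∧ K.Finite ∧
        ((A₀ ∩ ⋂ a ∈ l, (kR0 I A₀ eqv emb a)ᶜ) \ K) ⊆ ⋂₀ t := by
      intro t hfin
      refine Set.Finite.induction_on
        (motive := fun t _ => t ⊆ Gen →
          ∃ (l : Finset (Set X × ℕ × (Finset X → Set X))) (K : Set X),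
          (∀ a ∈ l, kActive I A₀ eqv emb a) ∧ K.Finite ∧
          ((A₀ ∩ ⋂ a ∈ l, (kR0 I A₀ eqv emb a)ᶜ) \ K) ⊆ ⋂₀ t) t hfin
        ?_ ?_
      · intro _
        exact ⟨∅, ∅, by simp, Set.finite_empty, by simp⟩
      intro s t hs ht ih hsub
      obtain ⟨l, K, hl, hK, hsubset⟩ := ih (fun x hx => hsub (Set.mem_insert_of_mem s hx))
      have hsmem : s ∈ Gen := hsub (Set.mem_insert s t)
      rw [hGen] at hsmem
      rcases hsmem with (hs1 | hs2) | hs3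
      · -- s = A₀
        refine ⟨l, K, hl, hK, ?_⟩
        rw [Set.sInter_insert]
        intro x hx
        rcases hs1 with rfl
        exact ⟨hx.1.1, hsubset hx⟩
      · -- s = Kᶜ
        obtain ⟨K', hK', rfl⟩ := hs2
        refine ⟨l, K ∪ K', hl, hK.union hK', ?_⟩
        rw [Set.sInter_insert]
        rintro x ⟨hx1, hx2⟩
        have hxK : x ∉ K := fun h => hx2 (Set.mem_union_left _ h)
        have hxK' : x ∉ K' := fun h => hx2 (Set.mem_union_right _ h)
        exact ⟨hxK', hsubset ⟨hx1, hxK⟩⟩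
      · -- s = (kR0 a)ᶜ
        obtain ⟨a, hau, rfl⟩ := hs3
        refine ⟨insert a l, K, ?_, hK, ?_⟩
        · intro b hb
          rcases Finset.mem_insert.mp hb with rfl | hb'
          · exact hau
          · exact hl b hb'
        · rw [Set.sInter_insert]
          rintro x ⟨hx1, hx2⟩
          have hx1b : ∀ b ∈ insert a l, x ∈ (kR0 I A₀ eqv emb b)ᶜ :=
            fun b hb => Set.mem_iInter₂.mp hx1.2 b hb
          constructor
          · exact hx1b a (Finset.mem_insert_self a l)
          · refine hsubset ⟨⟨hx1.1, ?_⟩, hx2⟩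
            exact Set.mem_iInter₂.mpr fun b hb => hx1b b (Finset.mem_insert_of_mem hb)
      
    intro t hsub hfin
    obtain ⟨l, K, hl, hK, hsubset⟩ := key t hfin hsub
    have hinf := kPHI I A₀ eqv emb l hl ∅ (fun _ => true) (by simp) K hK
    obtain ⟨x, hx⟩ := hinf.nonempty
    refine ⟨x, hsubset ?_⟩
    simp only [Finset.notMem_empty] at hx
    obtain ⟨⟨⟨h1, _⟩, h2⟩, h3⟩ := hx
    exact ⟨⟨h1, h2⟩, h3⟩
  -- the ultrafilter
  have hNeBot : (Filter.generate Gen).NeBot := by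
    rw [Filter.neBot_iff]
    intro hbot
    have hmem : (∅ : Set X) ∈ Filter.generate Gen := by
      rw [hbot]; exact Filter.mem_bot
    rw [Filter.mem_generate_iff] at hmem
    obtain ⟨t, hsub, hfin, hsubset⟩ := hmem
    obtain ⟨x, hx⟩ := hFIP t hsub hfin
    exact hsubset hx
  haveI := hNeBot
  have hmemGen : ∀ s ∈ Gen, s ∈ Ultrafilter.of (Filter.generate Gen) := by
    intro s hs
    apply Ultrafilter.of_le
    exact Filter.mem_generate_iff.mpr ⟨{s}, by simpa using hs, Set.finite_singleton s, by simp⟩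
  refine ⟨Ultrafilter.of (Filter.generate Gen), ?_, ?_, ?_⟩
  · exact hmemGen A₀ (Or.inl (Or.inl rfl))
  · intro K hK hKU
    have hc : Kᶜ ∈ Ultrafilter.of (Filter.generate Gen) :=
      hmemGen Kᶜ (Or.inl (Or.inr ⟨K, hK, rfl⟩))
    exact (Ultrafilter.compl_mem_iff_notMem.mp hc) hKU
  · intro R m Y hyp
    by_cases hact : kActive I A₀ eqv emb (R, m, Y)
    · exfalso
      obtain ⟨T, hTcard, hTeq, hbox⟩ := kR0_spec I A₀ eqv emb hact
      apply hbox
      refine hyp _ (kR0_subset I A₀ eqv emb (R, m, Y)) ?_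
      have hc : (kR0 I A₀ eqv emb (R, m, Y))ᶜ ∈ Ultrafilter.of (Filter.generate Gen) :=
        hmemGen _ (Or.inr ⟨(R, m, Y), hact, rfl⟩)
      exact Ultrafilter.compl_mem_iff_notMem.mp hc
    · have hall : ∀ T : Finset (Fin m → Bool), T.card ≤ m →
          box m Y (kCells A₀ eqv emb (R, m, Y) T) ∈ I := by
        intro T hT
        by_contra h
        exact hact ⟨T, hT, h⟩
      have hcover : box m Y R ⊆ ⋃ (T : {T : Finset (Fin m → Bool) // T.card ≤ m}),
          box m Y (kCells A₀ eqv emb (R, m, Y) T.1) := by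
        intro x hx
        rw [mem_box] at hx
        obtain ⟨s, hsR, hscard, hxY⟩ := hx
        set τ : X → (Fin m → Bool) :=
          fun y j => decide (y ∈ kE A₀ eqv emb ((R, m, Y), (j : ℕ))) with hτ
        refine Set.mem_iUnion.mpr ⟨⟨s.image τ, le_trans Finset.card_image_le hscard⟩, ?_⟩
        rw [mem_box]
        refine ⟨s, ?_, hscard, hxY⟩
        intro y hy
        refine ⟨?_, hsR hy⟩
        refine Set.mem_iUnion₂.mpr ⟨τ y, Finset.mem_image_of_mem τ hy, ?_⟩
        intro j
        simp only [hτ, decide_eq_true_eq]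
      have hunion : (⋃ (T : {T : Finset (Fin m → Bool) // T.card ≤ m}),
          box m Y (kCells A₀ eqv emb (R, m, Y) T.1)) ∈ I :=
        ideal_finite_iUnion hI _ (fun T => hall T.1 T.2)
      exact ideal_downward hI hunion hcover


noncomputable section Main

variable {X : Type} [Countable X] [Infinite X] {I : Set (Set X)} (hI : IsIdealInOurSense I)
variable (U : Ultrafilter X) (A₀ : Set X)

def Jset : Set (Set X) := {A | A ∈ I ∧ A ∉ U}

lemma opImage_mono {f : Ops X} {A B : Set X} (h : A ⊆ B) : opImage f A ⊆ opImage f B := by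
  rintro x ⟨v, hv, rfl⟩
  exact ⟨v, fun i => h (hv i), rfl⟩

section WithHyps

variable (hA₀I : A₀ ∈ I) (hA₀inf : A₀.Infinite) (hA₀U : A₀ ∈ U)
variable (hUfin : ∀ K : Set X, K.Finite → K ∉ U)
variable (hkill : ∀ (R : Set X) (m : ℕ) (Y : Finset X → Set X),
        (∀ r, r ⊆ R → r ∉ U → box m Y r ∈ I) → box m Y R ∈ I)

include hI hA₀I hA₀inf hA₀U hUfin in
lemma Jset_ideal : IsIdealInOurSense (Jset (I := I) U) := by
  refine ⟨?_, ?_, ?_, ?_, ?_⟩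
  · rintro A ⟨hAI, hAU⟩ B hBA
    exact ⟨hI.1 A hAI B hBA, fun hBU => hAU (Filter.mem_of_superset hBU hBA)⟩
  · rintro A ⟨hAI, hAU⟩ B ⟨hBI, hBU⟩
    refine ⟨hI.2.1 A hAI B hBI, ?_⟩
    intro hU
    rcases (Ultrafilter.union_mem_iff).mp hU with h | h
    · exact hAU h
    · exact hBU h
  · intro A hA
    exact ⟨hI.2.2.1 A hA, hUfin A hA⟩
  · have : Infinite ↥A₀ := hA₀inf.to_subtype
    obtain ⟨d⟩ := nonempty_denumerable ↥A₀
    set e : ℕ → X := fun n => ((Denumerable.eqv ↥A₀).symm n : ↥A₀) with he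
    have heinj : Function.Injective e := by
      intro a b h
      exact (Denumerable.eqv ↥A₀).symm.injective (Subtype.val_injective h)
    have heA₀ : ∀ n, e n ∈ A₀ := fun n => ((Denumerable.eqv ↥A₀).symm n).2
    set H₁ : Set X := e '' {n | Even n} with hH₁
    set H₂ : Set X := e '' {n | ¬ Even n} with hH₂
    have hH₁A₀ : H₁ ⊆ A₀ := by rintro x ⟨n, _, rfl⟩; exact heA₀ n
    have hH₂A₀ : H₂ ⊆ A₀ := by rintro x ⟨n, _, rfl⟩; exact heA₀ n
    have hEvInf : {n : ℕ | Even n}.Infinite := by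
      apply Set.infinite_of_injective_forall_mem (f := fun k : ℕ => 2 * k)
      · intro a b h; simp only [] at h; omega
      · intro a; exact ⟨a, (two_mul a)⟩
    have hOdInf : {n : ℕ | ¬ Even n}.Infinite := by
      apply Set.infinite_of_injective_forall_mem (f := fun k : ℕ => 2 * k + 1)
      · intro a b h; simp only [] at h; omega
      · intro a; simp [Nat.even_add_one, parity_simps]
    have hH₁inf : H₁.Infinite := hEvInf.image heinj.injOn
    have hH₂inf : H₂.Infinite := hOdInf.image heinj.injOn
    have hdisj : H₁ ∩ H₂ = ∅ := by
      ext x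
      simp only [Set.mem_inter_iff, Set.mem_empty_iff_false, iff_false]
      rintro ⟨⟨n, hn, rfl⟩, ⟨m, hm, hme⟩⟩
      have := heinj hme
      subst this
      exact hm hn
    by_cases h1 : H₁ ∈ U
    · refine ⟨H₂, ⟨hI.1 A₀ hA₀I H₂ hH₂A₀, ?_⟩, hH₂inf⟩
      intro h2
      have hint : H₁ ∩ H₂ ∈ U := Filter.inter_mem h1 h2
      rw [hdisj] at hint
      exact hUfin ∅ Set.finite_empty hint
    · exact ⟨H₁, ⟨hI.1 A₀ hA₀I H₁ hH₁A₀, h1⟩, hH₁inf⟩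
  · intro h
    exact hI.2.2.2.2 h.1

include hI hA₀I hA₀U hkill in
lemma CJ_subset : idealClone (Jset (I := I) U) ⊆ idealClone I := by
  rintro ⟨n, fh⟩ hf A hA
  by_cases hAU : A ∈ U
  · -- the hard case: use the killing property
    set R : Set X := A ∩ A₀ with hR
    have hRU : R ∈ U := Filter.inter_mem hAU hA₀U
    set Y : Finset X → Set X := fun s =>
      if ↑s ⊆ R ∧ s.card ≤ n + 1 then opImage ⟨n, fh⟩ ((A \ A₀) ∪ ↑s) else ∅ with hY
    have hAcompl : (A \ A₀) ∉ U := by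
      intro h
      have h2 : A₀ᶜ ∈ U := Filter.mem_of_superset h (by
        intro x hx
        exact hx.2)
      exact (Ultrafilter.compl_mem_iff_notMem.mp h2) hA₀U
    -- hypothesis of the killing property
    have hyp : ∀ r, r ⊆ R → r ∉ U → box (n + 1) Y r ∈ I := by
      intro r hrR hrU
      have hC : (A \ A₀) ∪ r ∈ Jset (I := I) U := by
        constructor
        · apply hI.1 A hA
          intro x hx
          rcases hx with hx | hx
          · exact hx.1
          · exact (hrR hx).1
        · intro hCU
          rcases (Ultrafilter.union_mem_iff).mp hCU with h | h
          · exact hAcompl h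
          · exact hrU h
      have himg := (hf _ hC).1
      have hboxsub : box (n + 1) Y r ⊆ opImage ⟨n, fh⟩ ((A \ A₀) ∪ r) := by
        intro x hx
        rw [mem_box] at hx
        obtain ⟨s, hsr, hscard, hxY⟩ := hx
        rw [hY] at hxY
        simp only [] at hxY
        rw [if_pos ⟨hsr.trans hrR, hscard⟩] at hxY
        refine opImage_mono ?_ hxY
        intro y hy
        rcases hy with hy | hy
        · exact Or.inl hy
        · exact Or.inr (hsr hy)
      exact hI.1 _ himg _ hboxsub
    have hkillR := hkill R (n + 1) Y hyp
    -- opImage f A ⊆ box (n+1) Y R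
    have hcov : opImage ⟨n, fh⟩ A ⊆ box (n + 1) Y R := by
      rintro x ⟨v, hv, rfl⟩
      set s : Finset X := (Finset.univ.image v).filter (· ∈ R) with hs
      have hsR : ↑s ⊆ R := by
        intro y hy
        simp only [hs, Finset.coe_filter, Set.mem_setOf_eq] at hy
        exact hy.2
      have hscard : s.card ≤ n + 1 := by
        calc s.card ≤ (Finset.univ.image v).card := Finset.card_filter_le _ _
          _ ≤ Finset.univ.card := Finset.card_image_le
          _ = n + 1 := by simp
      rw [mem_box]
      refine ⟨s, hsR, hscard, ?_⟩
      rw [hY]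
      simp only []
      rw [if_pos ⟨hsR, hscard⟩]
      refine ⟨v, ?_, rfl⟩
      intro i
      by_cases hvi : v i ∈ R
      · right
        simp only [hs, Finset.coe_filter, Set.mem_setOf_eq]
        exact ⟨Finset.mem_image_of_mem v (Finset.mem_univ i), hvi⟩
      · left
        refine ⟨hv i, ?_⟩
        intro hva
        exact hvi ⟨hv i, hva⟩
    exact hI.1 _ hkillR _ hcov
  · -- A itself is in J
    exact (hf A ⟨hA, hAU⟩).1

include hI hA₀I hA₀inf hA₀U hUfin in
lemma CJ_ne : ¬ (idealClone I ⊆ idealClone (Jset (I := I) U)) := by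
  intro hsub
  have : Infinite ↥A₀ := hA₀inf.to_subtype
  obtain ⟨d⟩ := nonempty_denumerable ↥A₀
  set e : ℕ → X := fun n => ((Denumerable.eqv ↥A₀).symm n : ↥A₀) with he
  have heinj : Function.Injective e := by
    intro a b h
    exact (Denumerable.eqv ↥A₀).symm.injective (Subtype.val_injective h)
  have heA₀ : ∀ n, e n ∈ A₀ := fun n => ((Denumerable.eqv ↥A₀).symm n).2
  set H₁ : Set X := e '' {n | Even n} with hH₁
  set H₂ : Set X := e '' {n | ¬ Even n} with hH₂
  have hH₁A₀ : H₁ ⊆ A₀ := by rintro x ⟨n, _, rfl⟩; exact heA₀ n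
  have hH₂A₀ : H₂ ⊆ A₀ := by rintro x ⟨n, _, rfl⟩; exact heA₀ n
  have hEvInf : {n : ℕ | Even n}.Infinite := by
    apply Set.infinite_of_injective_forall_mem (f := fun k : ℕ => 2 * k)
    · intro a b h; simp only [] at h; omega
    · intro a; exact ⟨a, (two_mul a)⟩
  have hOdInf : {n : ℕ | ¬ Even n}.Infinite := by
    apply Set.infinite_of_injective_forall_mem (f := fun k : ℕ => 2 * k + 1)
    · intro a b h; simp only [] at h; omega
    · intro a; simp [Nat.even_add_one, parity_simps]
  have hH₁inf : H₁.Infinite := hEvInf.image heinj.injOn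
  have hH₂inf : H₂.Infinite := hOdInf.image heinj.injOn
  have hdisj : H₁ ∩ H₂ = ∅ := by
    ext x
    simp only [Set.mem_inter_iff, Set.mem_empty_iff_false, iff_false]
    rintro ⟨⟨m', hn, rfl⟩, ⟨m, hm, hme⟩⟩
    have := heinj hme
    subst this
    exact hm hn
  have hcover : A₀ ⊆ H₁ ∪ H₂ := by
    intro x hx
    set k := Denumerable.eqv ↥A₀ ⟨x, hx⟩ with hk
    have hxk : e k = x := by
      simp only [he, hk, Equiv.symm_apply_apply]
    by_cases hev : Even k
    · exact Or.inl ⟨k, hev, hxk⟩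
    · exact Or.inr ⟨k, hev, hxk⟩
  -- choose the U-big half P and the U-small half B₀
  obtain ⟨P, B₀, hPA₀, hB₀A₀, hPinf, hB₀inf, hPU, hB₀U⟩ :
      ∃ P B₀ : Set X, P ⊆ A₀ ∧ B₀ ⊆ A₀ ∧ P.Infinite ∧ B₀.Infinite ∧ P ∈ U ∧ B₀ ∉ U := by
    by_cases h1 : H₁ ∈ U
    · refine ⟨H₁, H₂, hH₁A₀, hH₂A₀, hH₁inf, hH₂inf, h1, ?_⟩
      intro h2
      have hint : H₁ ∩ H₂ ∈ U := Filter.inter_mem h1 h2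
      rw [hdisj] at hint
      exact hUfin ∅ Set.finite_empty hint
    · have h2 : H₂ ∈ U := by
        have hun : H₁ ∪ H₂ ∈ U := Filter.mem_of_superset hA₀U hcover
        rcases (Ultrafilter.union_mem_iff).mp hun with h | h
        · exact absurd h h1
        · exact h
      exact ⟨H₂, H₁, hH₂A₀, hH₁A₀, hH₂inf, hH₁inf, h2, h1⟩
  have : Infinite ↥B₀ := hB₀inf.to_subtype
  have : Infinite ↥P := hPinf.to_subtype
  obtain ⟨dB⟩ := nonempty_denumerable ↥B₀
  obtain ⟨dP⟩ := nonempty_denumerable ↥P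
  set ubij : ↥B₀ ≃ ↥P := (Denumerable.eqv ↥B₀).trans (Denumerable.eqv ↥P).symm with hubij
  obtain ⟨c₂', hc₂'⟩ := hPinf.nonempty
  set u : X → X := fun x => if h : x ∈ B₀ then (ubij ⟨x, h⟩ : X) else c₂' with hu
  have huP : ∀ x, u x ∈ P := by
    intro x
    rw [hu]
    simp only []
    split
    · exact (ubij _).2
    · exact hc₂'
  set op : Ops X := ⟨0, fun v => u (v 0)⟩ with hop
  have hopCI : op ∈ idealClone I := by
    intro A hA
    apply hI.1 A₀ hA₀I
    rintro x ⟨v, hv, rfl⟩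
    exact hPA₀ (huP (v 0))
  have hopCJ := hsub hopCI
  have hB₀J : B₀ ∈ Jset (I := I) U := ⟨hI.1 A₀ hA₀I B₀ hB₀A₀, hB₀U⟩
  have himg := hopCJ B₀ hB₀J
  have himgP : opImage op B₀ = P := by
    apply Set.Subset.antisymm
    · rintro x ⟨v, hv, rfl⟩
      exact huP (v 0)
    · intro y hy
      refine ⟨fun _ => (ubij.symm ⟨y, hy⟩ : X), fun i => (ubij.symm ⟨y, hy⟩).2, ?_⟩
      show u ((ubij.symm ⟨y, hy⟩ : X)) = y
      rw [hu]
      simp only []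
      rw [dif_pos (ubij.symm ⟨y, hy⟩).2]
      have hsub2 : (⟨((ubij.symm ⟨y, hy⟩ : ↥B₀) : X), (ubij.symm ⟨y, hy⟩).2⟩ : ↥B₀) =
          ubij.symm ⟨y, hy⟩ := Subtype.ext rfl
      rw [hsub2, Equiv.apply_symm_apply]
  rw [himgP] at himg
  exact himg.2 hPU

include hI hUfin in
lemma CJ_max : ∀ D : Set (Ops X), IsClone D →
    ¬ (idealClone (Jset (I := I) U) ⊂ D ∧ D ⊂ idealClone I) := by
  intro D hD hcon
  obtain ⟨h1, h2⟩ := hcon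
  have hDCI : D ⊆ idealClone I := h2.1
  have hCJD : idealClone (Jset (I := I) U) ⊆ D := h1.1
  obtain ⟨f, hfD, hfCJ⟩ := Set.exists_of_ssubset h1
  obtain ⟨n, fh⟩ := f
  have hfCI : (⟨n, fh⟩ : Ops X) ∈ idealClone I := hDCI hfD
  -- a set in J whose image escapes J
  simp only [idealClone, Set.mem_setOf_eq] at hfCJ
  push_neg at hfCJ
  obtain ⟨Cs, hCsJ, hECJ⟩ := hfCJ
  set E := opImage ⟨n, fh⟩ Cs with hE
  have hEI : E ∈ I := hfCI Cs hCsJ.1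
  have hEU : E ∈ U := by
    by_contra h
    exact hECJ ⟨hEI, h⟩
  have hEinf : E.Infinite := by
    by_contra h
    rw [Set.not_infinite] at h
    exact hUfin E h hEU
  obtain ⟨c₂, hc₂⟩ := hEinf.nonempty
  set S := E \ {c₂} with hS
  have hSU : S ∈ U := by
    have hsing : ({c₂} : Set X)ᶜ ∈ U :=
      Ultrafilter.compl_mem_iff_notMem.mpr (hUfin {c₂} (Set.finite_singleton c₂))
    have hint := Filter.inter_mem hEU hsing
    have heq : E ∩ ({c₂} : Set X)ᶜ = S := by
      rw [hS, Set.diff_eq]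
    rwa [heq] at hint
  -- selector
  have hsel' : ∀ y : X, ∃ v : Fin (n+1) → X, y ∈ E → ((∀ i, v i ∈ Cs) ∧ fh v = y) := by
    intro y
    by_cases hy : y ∈ E
    · obtain ⟨v, hv, hvy⟩ := hy
      exact ⟨v, fun _ => ⟨hv, hvy⟩⟩
    · exact ⟨fun _ => c₂, fun h => absurd h hy⟩
  choose tsel htsel using hsel'
  set ψ : X → X := fun x => if x ∈ S then x else c₂ with hψ
  have hψE : ∀ x, ψ x ∈ E := by
    intro x
    rw [hψ]
    simp only []
    split
    · exact Set.diff_subset ‹x ∈ S›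
    · exact hc₂
  have hψS : ∀ x ∈ S, ψ x = x := by
    intro x hx
    simp [hψ, hx]
  -- every member of C_I belongs to D
  have hmain : idealClone I ⊆ D := by
    rintro ⟨m, gh⟩ hg
    set q : Fin (n+1) → (Fin (m+1) → X) → X :=
      fun i x => tsel (ψ (gh x)) i with hq
    have hqD : ∀ i, (⟨m, q i⟩ : Ops X) ∈ D := by
      intro i
      apply hCJD
      intro A hA
      have hsubset : opImage ⟨m, q i⟩ A ⊆ Cs := by
        rintro x ⟨v, hv, rfl⟩
        exact ((htsel (ψ (gh v))) (hψE _)).1 i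
      exact ⟨hI.1 Cs hCsJ.1 _ hsubset,
        fun hUU => hCsJ.2 (Filter.mem_of_superset hUU hsubset)⟩
    have hGD : (⟨m, fun x => fh (fun i => q i x)⟩ : Ops X) ∈ D := hD.2 n m fh q hfD hqD
    have hGeq : ∀ x, fh (fun i => q i x) = ψ (gh x) := by
      intro x
      exact ((htsel (ψ (gh x))) (hψE _)).2
    set vh : (Fin (m+2) → X) → X := fun z =>
      if z 0 = ψ (gh (fun j => z j.succ)) then gh (fun j => z j.succ) else c₂ with hvh
    have hvCJ : (⟨m+1, vh⟩ : Ops X) ∈ idealClone (Jset (I := I) U) := by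
      intro C hC
      constructor
      · apply hI.1 _ (hI.2.1 _ (hg C hC.1) _ (hI.2.2.1 {c₂} (Set.finite_singleton c₂)))
        rintro x ⟨z, hz, rfl⟩
        rw [hvh]
        simp only []
        split
        · exact Or.inl ⟨fun j => z j.succ, fun j => hz j.succ, rfl⟩
        · exact Or.inr rfl
      · intro hUmem
        have hsub' : opImage ⟨m+1, vh⟩ C ⊆ {c₂} ∪ {y | ψ y ∈ C} := by
          rintro x ⟨z, hz, rfl⟩
          rw [hvh]
          simp only []
          split_ifs with hcond
          · right
            show ψ (gh (fun j => z j.succ)) ∈ C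
            rw [← hcond]
            exact hz 0
          · exact Or.inl rfl
        have hP' : ({c₂} : Set X) ∪ {y | ψ y ∈ C} ∈ U := Filter.mem_of_superset hUmem hsub'
        have hP'2 : {y | ψ y ∈ C} ∈ U := by
          rcases (Ultrafilter.union_mem_iff).mp hP' with h | h
          · exact absurd h (hUfin {c₂} (Set.finite_singleton c₂))
          · exact h
        have hCS : {y | ψ y ∈ C} ∩ S ⊆ C := by
          rintro y ⟨hy1, hy2⟩
          have h3 : ψ y ∈ C := hy1
          rwa [hψS y hy2] at h3
        have : C ∈ U := Filter.mem_of_superset (Filter.inter_mem hP'2 hSU) hCS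
        exact hC.2 this
    have hvD : (⟨m+1, vh⟩ : Ops X) ∈ D := hCJD hvCJ
    set hcons : Fin (m+2) → (Fin (m+1) → X) → X :=
      Fin.cons (fun x => fh (fun i => q i x)) (fun j x => x j) with hhcons
    have hhD : ∀ i, (⟨m, hcons i⟩ : Ops X) ∈ D := by
      intro i
      refine Fin.cases ?_ ?_ i
      · have h0 : hcons 0 = fun x => fh (fun i => q i x) := by
          rw [hhcons]
          exact Fin.cons_zero _ _
        rw [h0]
        exact hGD
      · intro j
        have hsucc : hcons j.succ = fun x => x j := by
          rw [hhcons]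
          exact Fin.cons_succ _ _ _
        rw [hsucc]
        exact hD.1 m j
    have hcomp := hD.2 (m+1) m vh hcons hvD hhD
    have hfinal : (⟨m, fun x => vh (fun i => hcons i x)⟩ : Ops X) = ⟨m, gh⟩ := by
      congr 1
      funext x
      show vh (fun i => hcons i x) = gh x
      have hz0 : hcons 0 x = ψ (gh x) := by
        rw [hhcons, Fin.cons_zero]
        exact hGeq x
      have hztail : (fun j : Fin (m+1) => hcons j.succ x) = x := by
        funext j
        rw [hhcons, Fin.cons_succ]
      rw [hvh]
      simp only []
      rw [hztail, hz0, if_pos rfl]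
    rw [hfinal] at hcomp
    exact hcomp
  exact (h2.ne) (Set.Subset.antisymm hDCI hmain)

end WithHyps

end Main

/-- Every ideal clone contains a maximal proper subclone which is itself an
ideal clone. -/
theorem stmt5 {X : Type} [Countable X] [Infinite X]
    {I : Set (Set X)} (hI : IsIdealInOurSense I) :
    ∃ J : Set (Set X), IsIdealInOurSense J ∧ idealClone J ⊂ idealClone I ∧
      ∀ D : Set (Ops X), IsClone D → ¬ (idealClone J ⊂ D ∧ D ⊂ idealClone I) := by
  classical
  obtain ⟨A₀, hA₀I, hA₀inf⟩ := hI.2.2.2.1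
  obtain ⟨U, hA₀U, hUfin, hkill⟩ := exists_killing hI hA₀I hA₀inf
  refine ⟨Jset (I := I) U, Jset_ideal hI U A₀ hA₀I hA₀inf hA₀U hUfin, ?_, ?_⟩
  · rw [Set.ssubset_iff_subset_ne]
    constructor
    · exact CJ_subset hI U A₀ hA₀I hA₀U hkill
    · intro h
      exact CJ_ne hI U A₀ hA₀I hA₀inf hA₀U hUfin (le_of_eq h.symm)
  · exact CJ_max hI U hUfin
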